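/- Let f : X → Y be a continuous injective group homomorphism of topological abelian groups such that: the kernels of locally homeomorphic 'logarithm' maps log_X : X → V, log_Y : Y → W (V, W topological vector spaces over ℂ_p, log_X surjective) are the torsion subgroups, f restricts to an isomorphism on torsion subgroups, and the induced linear map V → W is injective with closed image. Then f is a closed map, hence a topological isomorphism onto its (closed) image. -/

import Mathlib

/-!
STATEMENT 16: Let `f : X → Y` be a continuous injective homomorphism of topological
abelian groups. Suppose there are 'logarithm' homomorphisms `log_X : X → V`,
`log_Y : Y → W` into topological `K`-vector spaces (`K` a model of `ℂ_p`) which are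
local homeomorphisms, `log_X` surjective, whose kernels are exactly the torsion
subgroups; suppose `f` restricts to an isomorphism on torsion subgroups, and the induced
linear map `g : V → W` (with `g ∘ log_X = log_Y ∘ f`) is injective with closed image
(here: a continuous injective closed map). Then `f` is a closed map, hence a topological
isomorphism onto its closed image (a closed embedding).
-/

theorem closed_map_criterion
    (p : ℕ) [Fact (Nat.Prime p)]
    (K : Type) [NormedField K] [CompleteSpace K] [IsAlgClosed K] [CharZero K]
    (hna : IsNonarchimedean fun x : K => ‖x‖)
    (hp : ‖(p : K)‖ = (p : ℝ)⁻¹)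
    (X Y V W : Type)
    [AddCommGroup X] [TopologicalSpace X] [IsTopologicalAddGroup X]
    [FirstCountableTopology X]
    [AddCommGroup Y] [TopologicalSpace Y] [IsTopologicalAddGroup Y]
    [FirstCountableTopology Y]
    [AddCommGroup V] [Module K V] [TopologicalSpace V] [IsTopologicalAddGroup V]
    [AddCommGroup W] [Module K W] [TopologicalSpace W] [IsTopologicalAddGroup W]
    (f : X →+ Y) (hfc : Continuous f) (hfi : Function.Injective f)
    (logX : X →+ V) (logY : Y →+ W)
    (hlocX : IsLocalHomeomorph (⇑logX)) (hlocY : IsLocalHomeomorph (⇑logY))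
    (hsurjX : Function.Surjective (⇑logX))
    (hkerX : ∀ x : X, logX x = 0 ↔ ∃ k : ℕ, 0 < k ∧ k • x = 0)
    (hkerY : ∀ y : Y, logY y = 0 ↔ ∃ k : ℕ, 0 < k ∧ k • y = 0)
    (htors : ∀ y : Y, (∃ k : ℕ, 0 < k ∧ k • y = 0) → ∃ x : X, f x = y)
    (g : V →ₗ[K] W) (hcomm : ∀ x : X, g (logX x) = logY (f x))
    (hgc : Continuous g) (hgi : Function.Injective g) (hgcl : IsClosedMap g) :
    IsClosedMap f ∧ IsClosed (Set.range f) ∧ Topology.IsClosedEmbedding (⇑f) := by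
  -- g is a closed embedding
  have hgemb : Topology.IsClosedEmbedding (⇑g) :=
    Topology.IsClosedEmbedding.of_continuous_injective_isClosedMap hgc hgi hgcl
  -- local charts at 0 for logX and logY
  obtain ⟨e, he0, heq⟩ := hlocX 0
  obtain ⟨e', he'0, heq'⟩ := hlocY 0
  have he00 : e 0 = 0 := by rw [← heq]; exact map_zero logX
  have he'00 : e' 0 = 0 := by rw [← heq']; exact map_zero logY
  have h0t : (0 : V) ∈ e.target := by
    have := e.map_source he0; rwa [he00] at this
  have hmain : IsClosedMap f := by
    intro C hC
    refine IsSeqClosed.isClosed ?_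
    intro ys y hmem hy
    choose xs hxsC hxsf using hmem
    -- f (xs n) tends to y
    have hfx : Filter.Tendsto (fun n => f (xs n)) Filter.atTop (nhds y) := by
      refine hy.congr fun n => (hxsf n).symm
    -- g (logX (xs n)) = logY (f (xs n)) tends to logY y
    have hgl : Filter.Tendsto (fun n => g (logX (xs n))) Filter.atTop (nhds (logY y)) := by
      have : Filter.Tendsto (fun n => logY (f (xs n))) Filter.atTop (nhds (logY y)) :=
        (hlocY.continuous.tendsto y).comp hfx
      exact this.congr fun n => (hcomm (xs n)).symm
    -- logY y is in the closed range of g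
    obtain ⟨v, hv⟩ : logY y ∈ Set.range g :=
      hgemb.isClosed_range.mem_of_tendsto hgl
        (Filter.Eventually.of_forall fun n => Set.mem_range_self _)
    -- logX (xs n) tends to v
    have hlx : Filter.Tendsto (fun n => logX (xs n)) Filter.atTop (nhds v) := by
      rw [hgemb.toIsEmbedding.toIsInducing.tendsto_nhds_iff]
      simpa [Function.comp_def, hv] using hgl
    obtain ⟨x, hx⟩ := hsurjX v
    -- w n = logX (xs n - x) tends to 0
    have hw : Filter.Tendsto (fun n => logX (xs n - x)) Filter.atTop (nhds 0) := by
      have : Filter.Tendsto (fun n => logX (xs n) - v) Filter.atTop (nhds (v - v)) :=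
        hlx.sub tendsto_const_nhds
      simpa [map_sub, hx] using this
    -- local inverse: u n = e.symm (w n)
    set u : ℕ → X := fun n => e.symm (logX (xs n - x)) with hu
    have hu0 : Filter.Tendsto u Filter.atTop (nhds 0) := by
      have hc : ContinuousAt e.symm 0 := e.continuousAt_symm h0t
      have : Filter.Tendsto u Filter.atTop (nhds (e.symm 0)) := hc.tendsto.comp hw
      rwa [show e.symm 0 = 0 by rw [← he00, e.left_inv he0]] at this
    have hev : ∀ᶠ n in Filter.atTop, logX (xs n - x) ∈ e.target :=
      hw.eventually_mem (e.open_target.mem_nhds h0t)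
    have hlogu : ∀ᶠ n in Filter.atTop, logX (u n) = logX (xs n - x) := by
      filter_upwards [hev] with n hn
      have h1 : logX (e.symm (logX (xs n - x))) = e (e.symm (logX (xs n - x))) :=
        congrFun heq _
      rw [h1]; exact e.right_inv hn
    -- t n = xs n - x - u n is eventually torsion
    have hlogt : ∀ᶠ n in Filter.atTop, logX (xs n - x - u n) = 0 := by
      filter_upwards [hlogu] with n hn
      rw [map_sub, hn, sub_self]
    -- f (t n) tends to z = y - f x
    have hft : Filter.Tendsto (fun n => f (xs n - x - u n)) Filter.atTop
        (nhds (y - f x)) := by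
      have : Filter.Tendsto (fun n => f (xs n) - f x - f (u n)) Filter.atTop
          (nhds (y - f x - f 0)) :=
        (hfx.sub tendsto_const_nhds).sub ((hfc.tendsto 0).comp hu0)
      simpa [map_sub] using this
    -- z = y - f x is torsion in Y
    have hz : logY (y - f x) = 0 := by
      rw [map_sub, ← hv, ← hcomm x, hx, sub_self]
    obtain ⟨x', hx'⟩ := htors _ ((hkerY _).mp hz)
    -- x' is torsion in X
    have hlx' : logX x' = 0 := by
      obtain ⟨k, hk, hky⟩ := (hkerY _).mp hz
      refine (hkerX x').mpr ⟨k, hk, hfi ?_⟩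
      rw [map_nsmul, hx', hky, map_zero]
    -- f (t n - x') tends to 0 and is eventually simultaneously: logY = 0 and in e'.source
    have hft0 : Filter.Tendsto (fun n => f (xs n - x - u n - x')) Filter.atTop
        (nhds 0) := by
      have h2 : Filter.Tendsto (fun n => f (xs n - x - u n) - f x') Filter.atTop
          (nhds (y - f x - f x')) := hft.sub tendsto_const_nhds
      have h3 : y - f x - f x' = 0 := by rw [hx', sub_self]
      rw [h3] at h2
      exact h2.congr fun n => (map_sub f _ _).symm
    have hsrc : ∀ᶠ n in Filter.atTop, f (xs n - x - u n - x') ∈ e'.source :=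
      hft0.eventually_mem (e'.open_source.mem_nhds he'0)
    have hfeq : ∀ᶠ n in Filter.atTop, xs n = x + x' + u n := by
      filter_upwards [hsrc, hlogt] with n hn hn0
      have hl0 : logY (f (xs n - x - u n - x')) = 0 := by
        rw [← hcomm, map_sub, hn0, hlx', sub_self, map_zero]
      have : f (xs n - x - u n - x') = 0 := by
        have h0src : (0 : Y) ∈ e'.source := he'0
        refine e'.injOn hn h0src ?_
        rw [← heq', hl0, map_zero]
      have := hfi (by rw [this, map_zero] : f (xs n - x - u n - x') = f 0)
      have h := sub_eq_zero.mp this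
      linear_combination (norm := abel) h
    -- hence xs tends to x + x' ∈ C, and y = f (x + x')
    have hxs : Filter.Tendsto xs Filter.atTop (nhds (x + x')) := by
      have : Filter.Tendsto (fun n => x + x' + u n) Filter.atTop (nhds (x + x' + 0)) :=
        tendsto_const_nhds.add hu0
      rw [add_zero] at this
      exact this.congr' (hfeq.mono fun n hn => hn.symm)
    have hmemC : x + x' ∈ C :=
      hC.mem_of_tendsto hxs (Filter.Eventually.of_forall hxsC)
    refine ⟨x + x', hmemC, ?_⟩
    rw [map_add, hx', add_sub_cancel]
  exact ⟨hmain, hmain.isClosed_range,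
    Topology.IsClosedEmbedding.of_continuous_injective_isClosedMap hfc hfi hmain⟩
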